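/- Given disjoint finite sets U_1, ..., U_m of vertices in a countably infinite vertex set, the set of m-edge-colorings of the complete graph that contain a vertex v joined by color i to every vertex of U_i for each i is dense and open in the product topology on colorings. -/
import Mathlib

/-- Vertices of an unordered pair as a `Finset`. -/
def sym2Verts {V : Type*} [DecidableEq V] : Sym2 V → Finset V :=
  Sym2.lift ⟨fun a b => {a, b}, fun a b => Finset.pair_comm a b⟩

lemma mem_sym2Verts {V : Type*} [DecidableEq V] (x : V) (e : Sym2 V) :
    x ∈ sym2Verts e ↔ x ∈ e := by
  induction e using Sym2.ind with
  | _ a b => simp [sym2Verts, Sym2.mem_iff]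

/-- Given pairwise disjoint finite sets `U 1, …, U m` of vertices of a countably
infinite set `V`, the set of `m`-edge-colourings (functions from unordered pairs to
colours) admitting a vertex `v` joined by colour `i` to each vertex of `U i` is open
and dense in the product topology. -/
theorem extension_set_open_dense
    (m : ℕ) {V : Type*} [Countable V] [Infinite V] [DecidableEq V]
    (U : Fin m → Finset V)
    (hU : ∀ i j : Fin m, i ≠ j → Disjoint (U i) (U j)) :
    IsOpen {c : Sym2 V → Fin m |
        ∃ v : V, (∀ i, v ∉ U i) ∧ ∀ i : Fin m, ∀ u ∈ U i, c s(v, u) = i} ∧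
    Dense {c : Sym2 V → Fin m |
        ∃ v : V, (∀ i, v ∉ U i) ∧ ∀ i : Fin m, ∀ u ∈ U i, c s(v, u) = i} := by
  classical
  constructor
  · have heq : {c : Sym2 V → Fin m |
        ∃ v : V, (∀ i, v ∉ U i) ∧ ∀ i : Fin m, ∀ u ∈ U i, c s(v, u) = i}
        = ⋃ (v : V) (_ : ∀ i, v ∉ U i),
            ⋂ (i : Fin m), ⋂ u ∈ U i, (fun c : Sym2 V → Fin m => c s(v, u)) ⁻¹' {i} := by
      ext c
      simp [Set.mem_iUnion, Set.mem_iInter]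
    rw [heq]
    refine isOpen_iUnion fun v => isOpen_iUnion fun _ => ?_
    refine isOpen_iInter_of_finite fun i => ?_
    refine (U i).finite_toSet.isOpen_biInter fun u _ => ?_
    exact (isOpen_discrete _).preimage (continuous_apply _)
  · rw [dense_iff_inter_open]
    rintro O hO ⟨f, hf⟩
    obtain ⟨I, u, hIu, hsub⟩ := isOpen_pi_iff.mp hO f hf
    set B : Finset V := (Finset.univ.biUnion U) ∪ I.biUnion sym2Verts with hB
    obtain ⟨v, hv⟩ := Infinite.exists_notMem_finset B
    have hvU : ∀ i, v ∉ U i := by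
      intro i hvi
      exact hv (Finset.mem_union_left _ (Finset.mem_biUnion.mpr ⟨i, Finset.mem_univ _, hvi⟩))
    have hvI : ∀ e ∈ I, v ∉ e := by
      intro e he hve
      exact hv (Finset.mem_union_right _
        (Finset.mem_biUnion.mpr ⟨e, he, (mem_sym2Verts v e).mpr hve⟩))
    set g : Sym2 V → Fin m := fun e =>
      if h : ∃ p : Fin m × V, p.2 ∈ U p.1 ∧ e = s(v, p.2) then h.choose.1 else f e with hg
    have hgv : ∀ i : Fin m, ∀ x ∈ U i, g s(v, x) = i := by
      intro i x hx
      have h : ∃ p : Fin m × V, p.2 ∈ U p.1 ∧ s(v, x) = s(v, p.2) := ⟨(i, x), hx, rfl⟩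
      rw [hg]
      simp only [dif_pos h]
      obtain ⟨hp1, hp2⟩ := h.choose_spec
      rw [Sym2.eq_iff] at hp2
      have hx2 : x = h.choose.2 := by
        rcases hp2 with ⟨_, h2⟩ | ⟨h1, _⟩
        · exact h2
        · rw [← h1] at hp1
          exact absurd hp1 (hvU _)
      by_contra hne
      exact (hU _ _ hne).forall_ne_finset hp1 (hx2 ▸ hx) rfl
    have hgI : ∀ e ∈ I, g e = f e := by
      intro e he
      rw [hg]
      refine dif_neg ?_
      rintro ⟨p, hp, rfl⟩
      exact hvI _ he (Sym2.mem_mk_left _ _)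
    refine ⟨g, hsub fun e he => ?_, v, hvU, hgv⟩
    rw [hgI e he]
    exact (hIu e he).2
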